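/- Let H have the exponential density P_H(h) = (1/Γ)e^{-h/Γ} on [0,∞) with Γ > 0, and define C(h) = (1/2)log₂(1+h). Then for T > 1, with h_T := -Γ·ln(1/T) = Γ·ln T, the BRQ throughput η_BRQ(T) = ∫₀^{h_T} (1/Γ)e^{-h/Γ}·(1/2)log₂(1+h) dh + (1/(2T))·log₂(1 + Γ ln T) is strictly increasing in T. -/

import Mathlib

open Real intervalIntegral

lemma key (Γ : ℝ) (hΓ : 0 < Γ) {T : ℝ} (hT : 1 < T) :
    HasDerivAt
      (fun T : ℝ =>
        (∫ h in (0 : ℝ)..(Γ * Real.log T),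
            (1 / Γ) * Real.exp (-h / Γ) * ((1 / 2) * Real.logb 2 (1 + h))) +
          (1 / (2 * T)) * Real.logb 2 (1 + Γ * Real.log T))
      (Γ / (2 * T ^ 2 * (1 + Γ * Real.log T) * Real.log 2)) T := by
  have hT0 : 0 < T := lt_trans one_pos hT
  have hlogT : 0 < Real.log T := Real.log_pos hT
  set u : ℝ := Γ * Real.log T with hu_def
  have hu : 0 < u := mul_pos hΓ hlogT
  have h1u : 0 < 1 + u := by linarith
  set f : ℝ → ℝ := fun h => (1 / Γ) * Real.exp (-h / Γ) * ((1 / 2) * Real.logb 2 (1 + h)) with hf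
  -- derivative of inner function
  have hinner : HasDerivAt (fun T : ℝ => Γ * Real.log T) (Γ * T⁻¹) T :=
    (Real.hasDerivAt_log (ne_of_gt hT0)).const_mul Γ
  -- f measurable
  have hmeas : Measurable f := by
    apply Measurable.mul
    · exact (measurable_const.mul ((measurable_id.neg.div_const Γ).exp))
    · exact measurable_const.mul ((measurable_const.add measurable_id).log.div_const _)
  -- f continuous on Icc 0 u
  have hcontOn : ContinuousOn f (Set.uIcc 0 u) := by
    apply ContinuousOn.mul
    · exact Continuous.continuousOn (by fun_prop)
    · apply ContinuousOn.mul continuousOn_const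
      apply ContinuousOn.div_const
      apply ContinuousOn.log (continuousOn_const.add continuousOn_id)
      intro x hx
      rw [Set.uIcc_of_le (le_of_lt hu)] at hx
      have := hx.1
      exact (by linarith : (0:ℝ) < 1 + x).ne'
  have hci : ContinuousAt f u := by
    apply ContinuousAt.mul
    · exact (continuous_const.mul (Real.continuous_exp.comp (continuous_id.neg.div_const Γ))).continuousAt
    · apply ContinuousAt.mul continuousAt_const
      apply ContinuousAt.div_const
      exact (Real.continuousAt_log (by linarith)).comp
        ((continuous_const.add continuous_id).continuousAt)
  have hint : IntervalIntegrable f MeasureTheory.volume 0 u :=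
    hcontOn.intervalIntegrable
  have hg : HasDerivAt (fun y => ∫ h in (0:ℝ)..y, f h) (f u) u :=
    intervalIntegral.integral_hasDerivAt_right hint
      hmeas.stronglyMeasurable.stronglyMeasurableAtFilter hci
  have hI : HasDerivAt (fun T : ℝ => ∫ h in (0:ℝ)..(Γ * Real.log T), f h)
      (f u * (Γ * T⁻¹)) T := by
    have := HasDerivAt.comp T hg hinner
    exact this
  -- second term
  have h1 : HasDerivAt (fun T : ℝ => 1 / (2 * T)) (-(2) / (2*T)^2) T := by
    have := (hasDerivAt_const T (1:ℝ)).div ((hasDerivAt_id T).const_mul 2)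
      (by positivity : (2:ℝ)*T ≠ 0)
    refine this.congr_deriv ?_
    simp only [id_eq]
    ring
  have hlog2 : HasDerivAt (fun T : ℝ => Real.logb 2 (1 + Γ * Real.log T))
      ((1 + u)⁻¹ * (Γ * T⁻¹) / Real.log 2) T := by
    have hL : HasDerivAt (fun T : ℝ => Real.log (1 + Γ * Real.log T))
        ((1 + u)⁻¹ * (Γ * T⁻¹)) T := by
      exact (Real.hasDerivAt_log (ne_of_gt h1u)).comp T (hinner.const_add 1)
    have : (fun T : ℝ => Real.logb 2 (1 + Γ * Real.log T)) =
        fun T : ℝ => Real.log (1 + Γ * Real.log T) / Real.log 2 := by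
      funext x; rw [Real.logb]
    rw [this]
    exact hL.div_const _
  have h2 : HasDerivAt (fun T : ℝ => (1 / (2 * T)) * Real.logb 2 (1 + Γ * Real.log T))
      ((-(2) / (2*T)^2) * Real.logb 2 (1 + u) + (1/(2*T)) * ((1 + u)⁻¹ * (Γ * T⁻¹) / Real.log 2)) T :=
    h1.mul hlog2
  have htotal := hI.add h2
  refine htotal.congr_deriv ?_
  -- show the derivative values agree
  have hexp : Real.exp (-u / Γ) = T⁻¹ := by
    rw [hu_def]
    rw [neg_div, mul_comm, mul_div_assoc, div_self (ne_of_gt hΓ), mul_one,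
      Real.exp_neg, Real.exp_log hT0]
  have hlog2pos : (0:ℝ) < Real.log 2 := Real.log_pos one_lt_two
  rw [hf]
  simp only []
  rw [hexp]
  rw [Real.logb]
  field_simp
  ring

/-- For the exponential (Rayleigh-power) density with mean `Γ > 0`, the BRQ throughput
`η_BRQ(T) = ∫₀^{Γ ln T} (1/Γ)e^{-h/Γ}·(1/2)log₂(1+h) dh + (1/(2T))·log₂(1 + Γ ln T)`
is strictly increasing in `T` on `(1, ∞)`. -/
theorem stmt19 (Γ : ℝ) (hΓ : 0 < Γ) :
    StrictMonoOn
      (fun T : ℝ =>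
        (∫ h in (0 : ℝ)..(Γ * Real.log T),
            (1 / Γ) * Real.exp (-h / Γ) * ((1 / 2) * Real.logb 2 (1 + h))) +
          (1 / (2 * T)) * Real.logb 2 (1 + Γ * Real.log T))
      (Set.Ioi 1) := by
  apply strictMonoOn_of_deriv_pos (convex_Ioi 1)
  · intro x hx
    exact (key Γ hΓ hx).continuousAt.continuousWithinAt
  · intro x hx
    rw [interior_Ioi] at hx
    rw [(key Γ hΓ hx).deriv]
    have hx0 : (0:ℝ) < x := lt_trans one_pos hx
    have h1 : 0 < Real.log x := Real.log_pos hx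
    have h2 : (0:ℝ) < Real.log 2 := Real.log_pos one_lt_two
    have : 0 < 1 + Γ * Real.log x := by positivity
    positivity
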